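/- Let E be a real Hilbert space, let L : E → ℝ, let θ ∈ E, and suppose L has gradient h at θ (i.e., HasGradientAt L h θ) with h ≠ 0. Let g ∈ E and define g_final = g if ⟪g, h⟫ ≥ 0, and g_final = g − (⟪g, h⟫ / ‖h‖²)·h otherwise. Then the function t ↦ L(θ − t·g_final) (ℝ → ℝ) has derivative −⟪h, g_final⟫ at t = 0, and this derivative is ≤ 0. -/

import Mathlib

open RealInnerProductSpace

theorem rectified_step_does_not_increase_calibration_loss
    {E : Type*} [NormedAddCommGroup E] [InnerProductSpace ℝ E] [CompleteSpace E]
    (L : E → ℝ) (θ : E) (h : E)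
    (hL : HasGradientAt L h θ) (hh : h ≠ 0) (g : E) :
    HasDerivAt (fun t : ℝ => L (θ - t • (if 0 ≤ ⟪g, h⟫ then g
        else g - (⟪g, h⟫ / ‖h‖ ^ 2) • h)))
      (-⟪h, if 0 ≤ ⟪g, h⟫ then g else g - (⟪g, h⟫ / ‖h‖ ^ 2) • h⟫) 0 ∧
    -⟪h, if 0 ≤ ⟪g, h⟫ then g else g - (⟪g, h⟫ / ‖h‖ ^ 2) • h⟫ ≤ 0 := by
  set v : E := if 0 ≤ ⟪g, h⟫ then g else g - (⟪g, h⟫ / ‖h‖ ^ 2) • h with hv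
  constructor
  · have hc : HasDerivAt (fun t : ℝ => θ - t • v) (-v) 0 := by
      have : HasDerivAt (fun t : ℝ => t • v) v 0 := by
        simpa using (hasDerivAt_id (0:ℝ)).smul_const v
      simpa using (this.const_sub θ)
    have hF : HasFDerivAt L ((InnerProductSpace.toDual ℝ E) h) θ := hL.hasFDerivAt
    have hθ : θ - (0:ℝ) • v = θ := by simp
    rw [← hθ] at hF
    have := hF.comp_hasDerivAt (0:ℝ) hc
    simp only [InnerProductSpace.toDual_apply_apply, inner_neg_right] at this
    exact this
  · by_cases hgh : 0 ≤ ⟪g, h⟫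
    · rw [hv, if_pos hgh]
      rw [real_inner_comm]
      linarith
    · rw [hv, if_neg hgh]
      have hn : ⟪h, h⟫ = ‖h‖ ^ 2 := real_inner_self_eq_norm_sq h
      have hne : (‖h‖ : ℝ) ^ 2 ≠ 0 := pow_ne_zero _ (norm_ne_zero_iff.mpr hh)
      rw [inner_sub_right, inner_smul_right, hn]
      rw [real_inner_comm h g]
      field_simp
      simp
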